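/- In the unitary Cayley graph of Z_n with n = 2^{r₁} p₂^{r₂}⋯p_t^{r_t} (t ≥ 2, odd primes p₂ < ⋯ < p_t), every 2-packing has at most two vertices. -/

import Mathlib

/-- The unitary Cayley graph of a commutative ring: vertices are ring elements,
with `x ~ y` iff `x ≠ y` and `x - y` is a unit. -/
def unitaryCayley (R : Type*) [CommRing R] : SimpleGraph R where
  Adj x y := x ≠ y ∧ IsUnit (x - y)
  symm := by
    constructor
    rintro x y ⟨hne, hu⟩
    exact ⟨hne.symm, by simpa [neg_sub] using hu.neg⟩
  loopless := by constructor; rintro x ⟨h, -⟩; exact h rfl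

/-- A packing `k`-coloring: every vertex gets a color in `{1, …, k}`, and any two
distinct vertices with the same color `i` are at distance greater than `i`
(`edist` equals `⊤` for unreachable pairs, which counts as distance greater than `i`). -/
def SimpleGraph.IsPackingColoring {V : Type*} (G : SimpleGraph V) (k : ℕ) (c : V → ℕ) : Prop :=
  (∀ v, 1 ≤ c v ∧ c v ≤ k) ∧
    ∀ u v, u ≠ v → c u = c v → (c u : ℕ∞) < G.edist u v

/-- The packing chromatic number: the least `k` admitting a packing `k`-coloring. -/
noncomputable def SimpleGraph.packingChromaticNumber {V : Type*} (G : SimpleGraph V) : ℕ :=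
  sInf {k | ∃ c : V → ℕ, G.IsPackingColoring k c}

/-- The independence number: the largest cardinality of a set of pairwise
nonadjacent vertices. -/
noncomputable def SimpleGraph.indepNum' {V : Type*} (G : SimpleGraph V) : ℕ :=
  sSup {n | ∃ s : Finset V, (∀ u ∈ s, ∀ v ∈ s, u ≠ v → ¬ G.Adj u v) ∧ s.card = n}

/-- The tensor (direct, categorical) product of two simple graphs. -/
def tensorProd {V W : Type*} (G : SimpleGraph V) (H : SimpleGraph W) :
    SimpleGraph (V × W) where
  Adj a b := G.Adj a.1 b.1 ∧ H.Adj a.2 b.2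
  symm := ⟨fun _ _ ⟨h1, h2⟩ => ⟨h1.symm, h2.symm⟩⟩
  loopless := ⟨fun a h => G.irrefl h.1⟩

/-- The tensor (direct, categorical) product of a family of simple graphs. -/
def tensorPi {ι : Type*} [Nonempty ι] {V : ι → Type*} (G : ∀ i, SimpleGraph (V i)) :
    SimpleGraph (∀ i, V i) where
  Adj a b := ∀ i, (G i).Adj (a i) (b i)
  symm := ⟨fun _ _ h i => (h i).symm⟩
  loopless := ⟨fun a h => (G (Classical.arbitrary ι)).irrefl (h _)⟩


private lemma unit_of_cast_ne_zero {p k : ℕ} (hp : p.Prime) (hk : k ≠ 0)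
    (y : ZMod (p ^ k)) (h : ZMod.castHom (dvd_pow_self p hk) (ZMod p) y ≠ 0) : IsUnit y := by
  haveI : NeZero (p ^ k) := ⟨pow_ne_zero _ hp.pos.ne'⟩
  have hy : ((y.val : ℕ) : ZMod p) ≠ 0 := by
    rwa [← map_natCast (ZMod.castHom (dvd_pow_self p hk) (ZMod p)) y.val,
      ZMod.natCast_zmod_val]
  rw [Ne, ZMod.natCast_eq_zero_iff] at hy
  have hc : Nat.Coprime y.val (p ^ k) :=
    Nat.Coprime.pow_right k ((hp.coprime_iff_not_dvd.mpr hy).symm)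
  have := (ZMod.isUnit_iff_coprime y.val (p ^ k)).mpr hc
  rwa [ZMod.natCast_zmod_val] at this

private lemma sum_two_units : ∀ m : ℕ, Odd m → ∀ x : ZMod m,
    ∃ a : ZMod m, IsUnit a ∧ IsUnit (x - a) := by
  intro m
  induction m using Nat.recOnPosPrimePosCoprime with
  | prime_pow p k hp hk =>
    intro hodd x
    have hp' : p.Prime := hp
    have hk' : k ≠ 0 := hk.ne'
    have hp2 : p ≠ 2 := by
      rintro rfl
      exact (Nat.not_odd_iff_even.mpr (Nat.even_pow.mpr ⟨even_two, hk'⟩)) hodd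
    haveI : Fact p.Prime := ⟨hp'⟩
    set g := ZMod.castHom (dvd_pow_self p hk') (ZMod p) with hg
    by_cases h1 : g (x - 1) = 0
    · refine ⟨2, ?_, ?_⟩
      · apply unit_of_cast_ne_zero hp' hk'
        rw [← hg]
        have : g 2 = 2 := map_ofNat g 2
        rw [this]
        have : ((2 : ℕ) : ZMod p) ≠ 0 := by
          rw [Ne, ZMod.natCast_eq_zero_iff]
          intro hd
          exact hp2 ((Nat.prime_dvd_prime_iff_eq hp' Nat.prime_two).mp hd)
        simpa using this
      · apply unit_of_cast_ne_zero hp' hk'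
        rw [← hg]
        have h2 : g (x - 2) = g (x - 1) - 1 := by
          simp only [map_sub, map_one]
          have : (g 2 : ZMod p) = 2 := map_ofNat g 2
          rw [this]
          ring
        rw [h2, h1, zero_sub]
        exact neg_ne_zero.mpr one_ne_zero
    · exact ⟨1, isUnit_one, unit_of_cast_ne_zero hp' hk' _ h1⟩
  | zero =>
    intro h
    simp [Nat.odd_iff] at h
  | one =>
    intro _ x
    exact ⟨0, isUnit_of_subsingleton _, isUnit_of_subsingleton _⟩
  | coprime a b ha hb hab IHa IHb =>
    intro hodd x
    obtain ⟨hoa, hob⟩ := (Nat.odd_mul).mp hodd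
    set E := ZMod.chineseRemainder hab with hE
    obtain ⟨a1, ha1, ha1'⟩ := IHa hoa (E x).1
    obtain ⟨a2, ha2, ha2'⟩ := IHb hob (E x).2
    have hprod : IsUnit ((a1, a2) : ZMod a × ZMod b) := by
      obtain ⟨b1, hb1⟩ := isUnit_iff_exists_inv.mp ha1
      obtain ⟨b2, hb2⟩ := isUnit_iff_exists_inv.mp ha2
      exact isUnit_iff_exists_inv.mpr ⟨(b1, b2), Prod.ext hb1 hb2⟩
    have hprod' : IsUnit (((E x).1 - a1, (E x).2 - a2) : ZMod a × ZMod b) := by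
      obtain ⟨b1, hb1⟩ := isUnit_iff_exists_inv.mp ha1'
      obtain ⟨b2, hb2⟩ := isUnit_iff_exists_inv.mp ha2'
      exact isUnit_iff_exists_inv.mpr ⟨(b1, b2), Prod.ext hb1 hb2⟩
    refine ⟨E.symm (a1, a2), hprod.map E.symm, ?_⟩
    have : x - E.symm (a1, a2) = E.symm (((E x).1 - a1, (E x).2 - a2)) := by
      rw [show (((E x).1 - a1, (E x).2 - a2) : ZMod a × ZMod b)
            = E x - (a1, a2) from rfl, map_sub, RingEquiv.symm_apply_apply]
    rw [this]
    exact hprod'.map E.symm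

private lemma exists_mid (n : ℕ) (hn : n ≠ 0) (h2 : 2 ∣ n) (d : ZMod n)
    (hd : ZMod.castHom h2 (ZMod 2) d = 0) :
    ∃ a : ZMod n, IsUnit a ∧ IsUnit (d - a) := by
  have hex : ∃ e m : ℕ, e ≠ 0 ∧ Odd m ∧ Nat.Coprime (2 ^ e) m ∧ 2 ^ e * m = n := by
    refine ⟨n.factorization 2, ordCompl[2] n, ?_, ?_, ?_,
      Nat.ordProj_mul_ordCompl_eq_self n 2⟩
    · exact (Nat.Prime.factorization_pos_of_dvd Nat.prime_two hn h2).ne'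
    · exact Nat.odd_iff.mpr (Nat.two_dvd_ne_zero.mp
        (Nat.not_dvd_ordCompl Nat.prime_two hn))
    · exact Nat.Coprime.pow_left _ (Nat.coprime_ordCompl Nat.prime_two hn)
  obtain ⟨e, m, he, hm, hco, rfl⟩ := hex
  set E := ZMod.chineseRemainder hco with hE
  set g2 := ZMod.castHom (dvd_pow_self 2 he) (ZMod 2) with hg2
  have hcomp : g2.comp ((RingHom.fst (ZMod (2 ^ e)) (ZMod m)).comp (E : ZMod (2 ^ e * m) →+* ZMod (2 ^ e) × ZMod m))
      = ZMod.castHom h2 (ZMod 2) := RingHom.ext_zmod _ _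
  have hd1 : g2 (E d).1 = 0 := by
    have := congrArg (fun f : ZMod (2 ^ e * m) →+* ZMod 2 => f d) hcomp
    simpa using this.trans hd
  have hu1 : IsUnit ((E d).1 - 1) := by
    apply unit_of_cast_ne_zero Nat.prime_two he
    rw [← hg2, map_sub, hd1, map_one, zero_sub]
    decide
  obtain ⟨a2, ha2, ha2'⟩ := sum_two_units m hm (E d).2
  have hprod : IsUnit ((1, a2) : ZMod (2 ^ e) × ZMod m) := by
    obtain ⟨b2, hb2⟩ := isUnit_iff_exists_inv.mp ha2
    exact isUnit_iff_exists_inv.mpr ⟨(1, b2), Prod.ext (one_mul 1) hb2⟩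
  have hprod' : IsUnit (((E d).1 - 1, (E d).2 - a2) : ZMod (2 ^ e) × ZMod m) := by
    obtain ⟨b1, hb1⟩ := isUnit_iff_exists_inv.mp hu1
    obtain ⟨b2, hb2⟩ := isUnit_iff_exists_inv.mp ha2'
    exact isUnit_iff_exists_inv.mpr ⟨(b1, b2), Prod.ext hb1 hb2⟩
  refine ⟨E.symm (1, a2), hprod.map E.symm, ?_⟩
  have : d - E.symm (1, a2) = E.symm (((E d).1 - 1, (E d).2 - a2)) := by
    rw [show (((E d).1 - 1, (E d).2 - a2) : ZMod (2 ^ e) × ZMod m)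
          = E d - (1, a2) from rfl, map_sub, RingEquiv.symm_apply_apply]
  rw [this]
  exact hprod'.map E.symm

theorem stmt12 (n : ℕ) (ht : 2 ≤ n.primeFactors.card) (heven : n.minFac = 2)
    (s : Finset (ZMod n))
    (hs : ∀ u ∈ s, ∀ v ∈ s, u ≠ v → (2 : ℕ∞) < (unitaryCayley (ZMod n)).edist u v) :
    s.card ≤ 2 := by
  have hn0 : n ≠ 0 := by rintro rfl; simp at ht
  have hn1 : n ≠ 1 := by rintro rfl; simp at ht
  have h2 : 2 ∣ n := heven ▸ n.minFac_dvd
  haveI : NeZero n := ⟨hn0⟩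
  haveI : Fact (1 < n) := ⟨by omega⟩
  classical
  set f := ZMod.castHom h2 (ZMod 2) with hf
  have key : ∀ u ∈ s, ∀ v ∈ s, f u = f v → u = v := by
    intro u hu v hv huv
    by_contra hne
    have hd : f (u - v) = 0 := by rw [map_sub, huv, sub_self]
    obtain ⟨a, ha, hda⟩ := exists_mid n hn0 h2 (u - v) hd
    have hu1 : IsUnit (u - (v + a)) := by
      rw [sub_add_eq_sub_sub]; exact hda
    have hadj1 : (unitaryCayley (ZMod n)).Adj u (v + a) :=
      ⟨sub_ne_zero.mp hu1.ne_zero, hu1⟩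
    have hu2 : IsUnit ((v + a) - v) := by
      rw [add_sub_cancel_left]; exact ha
    have hadj2 : (unitaryCayley (ZMod n)).Adj (v + a) v :=
      ⟨sub_ne_zero.mp hu2.ne_zero, hu2⟩
    have hw : (unitaryCayley (ZMod n)).edist u v ≤ 2 := by
      have := SimpleGraph.edist_le
        (SimpleGraph.Walk.cons hadj1 (SimpleGraph.Walk.cons hadj2 SimpleGraph.Walk.nil))
      simpa using this
    exact (hs u hu v hv hne).not_ge hw
  have hle : s.card ≤ (Finset.univ : Finset (ZMod 2)).card := by
    apply Finset.card_le_card_of_injOn f (fun a _ => Finset.mem_univ _)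
    intro u hu v hv h
    exact key u (by simpa using hu) v (by simpa using hv) h
  rwa [Finset.card_univ, ZMod.card] at hle
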